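/- arXiv:2107.03251 — 6 statements merged into one kernel-verified Lean document; each statement's English description precedes it below -/
import Mathlib

section
/- Let K be a finite index set, and for each k let τ_k ≥ 0, a_k ≥ 0, b_k ≥ 0 be real numbers. Then Σ_k τ_k·log(1 + a_k·b_k) ≤ max( Σ_k τ_k·log(1 + a_k²), Σ_k τ_k·log(1 + b_k²) ). -/
lemma log_mid (a b : ℝ) (ha : 0 ≤ a) (hb : 0 ≤ b) :
    Real.log (1 + a * b) ≤ (Real.log (1 + a ^ 2) + Real.log (1 + b ^ 2)) / 2 := by
  have h2 : (0:ℝ) < 1 + a ^ 2 := by positivity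
  have h3 : (0:ℝ) < 1 + b ^ 2 := by positivity
  have key : (1 + a * b) ^ 2 ≤ (1 + a ^ 2) * (1 + b ^ 2) := by nlinarith [sq_nonneg (a - b)]
  have := Real.log_le_log (by positivity) key
  rw [Real.log_pow, Real.log_mul h2.ne' h3.ne'] at this
  push_cast at this
  linarith

/-- Inequality chain (35): the weighted sum of logarithmic throughput terms with
two distinct gain profiles is bounded by the better of the two static ones. -/
theorem stmt_3 {ι : Type*} (K : Finset ι) (τ a b : ι → ℝ)
    (hτ : ∀ k ∈ K, 0 ≤ τ k) (ha : ∀ k ∈ K, 0 ≤ a k) (hb : ∀ k ∈ K, 0 ≤ b k) :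
    ∑ k ∈ K, τ k * Real.log (1 + a k * b k) ≤
      max (∑ k ∈ K, τ k * Real.log (1 + (a k) ^ 2))
          (∑ k ∈ K, τ k * Real.log (1 + (b k) ^ 2)) := by
  have step : ∑ k ∈ K, τ k * Real.log (1 + a k * b k) ≤
      ((∑ k ∈ K, τ k * Real.log (1 + (a k) ^ 2)) +
       (∑ k ∈ K, τ k * Real.log (1 + (b k) ^ 2))) / 2 := by
    rw [← Finset.sum_add_distrib, Finset.sum_div]
    refine Finset.sum_le_sum fun k hk => ?_
    have := log_mid (a k) (b k) (ha k hk) (hb k hk)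
    have hτk := hτ k hk
    calc τ k * Real.log (1 + a k * b k)
        ≤ τ k * ((Real.log (1 + (a k) ^ 2) + Real.log (1 + (b k) ^ 2)) / 2) :=
          mul_le_mul_of_nonneg_left this hτk
      _ = (τ k * Real.log (1 + (a k) ^ 2) + τ k * Real.log (1 + (b k) ^ 2)) / 2 := by ring
  rcases le_total (∑ k ∈ K, τ k * Real.log (1 + (a k) ^ 2))
      (∑ k ∈ K, τ k * Real.log (1 + (b k) ^ 2)) with h | h
  · exact le_max_of_le_right (by linarith)
  · exact le_max_of_le_left (by linarith)
end

section
/- Let S be a nonempty set, K a finite index set, τ_k ≥ 0 real weights, and f_k : S → ℝ functions with f_k(x) ≥ 0 for all x ∈ S and all k. Define F(x, y) = Σ_k τ_k·log(1 + f_k(x)·f_k(y)) and G(x) = Σ_k τ_k·log(1 + f_k(x)²). If G is bounded above on S, then sup_{(x,y) ∈ S×S} F(x, y) = sup_{x ∈ S} G(x). -/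
private lemma log_amgm {a b : ℝ} (ha : 0 ≤ a) (hb : 0 ≤ b) :
    Real.log (1 + a * b) ≤ (Real.log (1 + a ^ 2) + Real.log (1 + b ^ 2)) / 2 := by
  have h1 : (0:ℝ) < 1 + a * b := by positivity
  have h2 : (0:ℝ) < 1 + a ^ 2 := by positivity
  have h3 : (0:ℝ) < 1 + b ^ 2 := by positivity
  have key : (1 + a * b) ^ 2 ≤ (1 + a ^ 2) * (1 + b ^ 2) := by nlinarith [sq_nonneg (a - b)]
  have := Real.log_le_log (by positivity) key
  rw [Real.log_pow, Real.log_mul h2.ne' h3.ne'] at this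
  push_cast at this
  linarith

/-- Abstract form of `R*_{UL-adp} = R*_{Static}`: allowing two independent
phase-shift vectors yields the same optimal weighted sum-log throughput as
forcing the same vector for both phases. -/
theorem stmt_4 {S : Type*} [Nonempty S] {ι : Type*} (K : Finset ι)
    (τ : ι → ℝ) (f : ι → S → ℝ)
    (hτ : ∀ k ∈ K, 0 ≤ τ k) (hf : ∀ k ∈ K, ∀ x : S, 0 ≤ f k x)
    (F : S → S → ℝ) (G : S → ℝ)
    (hF : ∀ x y : S, F x y = ∑ k ∈ K, τ k * Real.log (1 + f k x * f k y))
    (hG : ∀ x : S, G x = ∑ k ∈ K, τ k * Real.log (1 + (f k x) ^ 2))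
    (hbdd : BddAbove (Set.range G)) :
    (⨆ p : S × S, F p.1 p.2) = ⨆ x : S, G x := by
  have hFG : ∀ x y : S, F x y ≤ (G x + G y) / 2 := by
    intro x y
    rw [hF, hG, hG, ← Finset.sum_add_distrib, Finset.sum_div]
    refine Finset.sum_le_sum fun k hk => ?_
    have := mul_le_mul_of_nonneg_left (log_amgm (hf k hk x) (hf k hk y)) (hτ k hk)
    linarith
  have hle : ∀ x y : S, F x y ≤ ⨆ x : S, G x := by
    intro x y
    have h1 : G x ≤ ⨆ x : S, G x := le_ciSup hbdd x
    have h2 : G y ≤ ⨆ x : S, G x := le_ciSup hbdd y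
    linarith [hFG x y]
  have hbddF : BddAbove (Set.range fun p : S × S => F p.1 p.2) := by
    refine ⟨⨆ x : S, G x, fun v hv => ?_⟩
    obtain ⟨p, rfl⟩ := hv
    exact hle p.1 p.2
  have hdiag : ∀ x : S, F x x = G x := by
    intro x; rw [hF, hG]; exact Finset.sum_congr rfl fun k _ => by rw [sq]
  apply le_antisymm
  · exact ciSup_le fun p => hle p.1 p.2
  · refine ciSup_le fun x => ?_
    calc G x = F x x := (hdiag x).symm
    _ ≤ ⨆ p : S × S, F p.1 p.2 := le_ciSup hbddF (x, x)
end

section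
/- Fix a vector q ∈ ℂ^N. The function (v, u) ↦ |⟨q, v⟩|⁴ / u², defined for v ∈ ℂ^N and real u > 0 (where ⟨q, v⟩ = Σ_n conj(q_n)·v_n and ℂ^N is viewed as a real vector space), is jointly convex on ℂ^N × (0, ∞). -/
/-- Key scalar inequality: joint convexity of `(x, u) ↦ x⁴ / u²` on `x ≥ 0, u > 0`,
applied to an upper bound `x ≤ a x₁ + b x₂`. -/
lemma aux_key (x x₁ x₂ u₁ u₂ a b : ℝ) (hx : 0 ≤ x) (hx₁ : 0 ≤ x₁) (hx₂ : 0 ≤ x₂)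
    (hu₁ : 0 < u₁) (hu₂ : 0 < u₂) (ha : 0 ≤ a) (hb : 0 ≤ b) (hab : a + b = 1)
    (hle : x ≤ a * x₁ + b * x₂) :
    x ^ 4 / (a * u₁ + b * u₂) ^ 2 ≤ a * (x₁ ^ 4 / u₁ ^ 2) + b * (x₂ ^ 4 / u₂ ^ 2) := by
  have hu : 0 < a * u₁ + b * u₂ := by
    rcases eq_or_lt_of_le ha with h | h
    · have hb1 : b = 1 := by linarith
      simpa [← h, hb1] using hu₂
    · have : 0 ≤ b * u₂ := mul_nonneg hb hu₂.le
      nlinarith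
  set s₁ := x₁ ^ 2 / u₁ with hs₁
  set s₂ := x₂ ^ 2 / u₂ with hs₂
  have hs₁n : 0 ≤ s₁ := div_nonneg (sq_nonneg _) hu₁.le
  have hs₂n : 0 ≤ s₂ := div_nonneg (sq_nonneg _) hu₂.le
  -- Cauchy–Schwarz: (a x₁ + b x₂)² ≤ (a u₁ + b u₂)(a s₁ + b s₂)
  have hCS : (a * x₁ + b * x₂) ^ 2 ≤ (a * u₁ + b * u₂) * (a * s₁ + b * s₂) := by
    have hpoly : (a * x₁ + b * x₂) ^ 2 * (u₁ * u₂) ≤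
        (a * u₁ + b * u₂) * (a * x₁ ^ 2 * u₂ + b * x₂ ^ 2 * u₁) := by
      nlinarith [mul_nonneg (mul_nonneg ha hb) (sq_nonneg (x₁ * u₂ - x₂ * u₁))]
    have hrw : (a * u₁ + b * u₂) * (a * s₁ + b * s₂) =
        (a * u₁ + b * u₂) * (a * x₁ ^ 2 * u₂ + b * x₂ ^ 2 * u₁) / (u₁ * u₂) := by
      rw [hs₁, hs₂]; field_simp
    rw [hrw, le_div_iff₀ (by positivity)]
    exact hpoly
  -- convexity of the square
  have hsq : (a * s₁ + b * s₂) ^ 2 ≤ a * s₁ ^ 2 + b * s₂ ^ 2 := by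
    nlinarith [mul_nonneg ha hb, sq_nonneg (s₁ - s₂)]
  have hx2 : x ^ 2 ≤ (a * x₁ + b * x₂) ^ 2 := by
    have : 0 ≤ a * x₁ + b * x₂ := by positivity
    nlinarith
  have hchain : x ^ 4 ≤ (a * u₁ + b * u₂) ^ 2 * (a * s₁ ^ 2 + b * s₂ ^ 2) := by
    have h1 : x ^ 4 = (x ^ 2) ^ 2 := by ring
    have h2 : x ^ 2 ≤ (a * u₁ + b * u₂) * (a * s₁ + b * s₂) := le_trans hx2 hCS
    have h3 : (x ^ 2) ^ 2 ≤ ((a * u₁ + b * u₂) * (a * s₁ + b * s₂)) ^ 2 := by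
      apply pow_le_pow_left₀ (sq_nonneg x) h2
    calc x ^ 4 = (x ^ 2) ^ 2 := h1
      _ ≤ ((a * u₁ + b * u₂) * (a * s₁ + b * s₂)) ^ 2 := h3
      _ = (a * u₁ + b * u₂) ^ 2 * (a * s₁ + b * s₂) ^ 2 := by ring
      _ ≤ (a * u₁ + b * u₂) ^ 2 * (a * s₁ ^ 2 + b * s₂ ^ 2) := by
          apply mul_le_mul_of_nonneg_left hsq (sq_nonneg _)
  rw [div_le_iff₀ (by positivity)]
  have e₁ : s₁ ^ 2 = x₁ ^ 4 / u₁ ^ 2 := by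
    rw [hs₁]; field_simp
  have e₂ : s₂ ^ 2 = x₂ ^ 4 / u₂ ^ 2 := by
    rw [hs₂]; field_simp
  calc x ^ 4 ≤ (a * u₁ + b * u₂) ^ 2 * (a * s₁ ^ 2 + b * s₂ ^ 2) := hchain
    _ = (a * (x₁ ^ 4 / u₁ ^ 2) + b * (x₂ ^ 4 / u₂ ^ 2)) * (a * u₁ + b * u₂) ^ 2 := by
        rw [e₁, e₂]; ring

/-- Lemma 1 in the substituted variable: `(v, u) ↦ |⟨q, v⟩|⁴ / u²` is jointly
convex on `ℂ^N × (0, ∞)` (with `ℂ^N` viewed as a real vector space). -/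
theorem stmt_8 (N : ℕ) (q : Fin N → ℂ) :
    ConvexOn ℝ {p : (Fin N → ℂ) × ℝ | 0 < p.2}
      (fun p : (Fin N → ℂ) × ℝ =>
        ‖∑ n, (starRingEnd ℂ) (q n) * p.1 n‖ ^ 4 / p.2 ^ 2) := by
  constructor
  · exact (convex_Ioi (0 : ℝ)).linear_preimage (LinearMap.snd ℝ (Fin N → ℂ) ℝ)
  · intro p hp r hr a b ha hb hab
    set F : (Fin N → ℂ) → ℂ := fun v => ∑ n, (starRingEnd ℂ) (q n) * v n with hF
    have hlin : F (a • p.1 + b • r.1) = (a : ℂ) * F p.1 + (b : ℂ) * F r.1 := by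
      simp only [hF, Finset.mul_sum]
      rw [← Finset.sum_add_distrib]
      apply Finset.sum_congr rfl
      intro n _
      simp [Pi.add_apply, Pi.smul_apply, smul_eq_mul]
      ring
    have habs : ‖F (a • p.1 + b • r.1)‖ ≤
        a * ‖F p.1‖ + b * ‖F r.1‖ := by
      rw [hlin]
      refine le_trans (norm_add_le _ _) ?_
      simp [map_mul, Complex.norm_real, abs_of_nonneg ha, abs_of_nonneg hb]
    have hsnd : (a • p + b • r).2 = a * p.2 + b * r.2 := rfl
    have hfst : (a • p + b • r).1 = a • p.1 + b • r.1 := rfl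
    simp only [hsnd, hfst]
    exact aux_key _ _ _ _ _ a b (norm_nonneg _) (norm_nonneg _)
      (norm_nonneg _) hp hr ha hb hab habs
end

section
/- For all complex numbers z, z₀ and all real numbers τ > 0 and t > 0, it holds that |z|⁴·τ ≥ 4·t·|z₀|²·Re(conj(z₀)·z) − 2·|z₀|⁴·t^{3/2}/√τ − |z₀|⁴·t, with equality when z = z₀ and τ = t. -/
/-- SCA lower bound (17): for complex `z, z₀` and reals `τ, t > 0`,
`|z|⁴·τ ≥ 4·t·|z₀|²·Re(conj(z₀)·z) − 2·|z₀|⁴·t^{3/2}/√τ − |z₀|⁴·t`,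
with equality when `z = z₀` and `τ = t`. -/
theorem stmt_11 (z z₀ : ℂ) (τ t : ℝ) (hτ : 0 < τ) (ht : 0 < t) :
    (‖z‖ ^ 4 * τ ≥
      4 * t * ‖z₀‖ ^ 2 * ((starRingEnd ℂ) z₀ * z).re
        - 2 * ‖z₀‖ ^ 4 * t ^ ((3 : ℝ) / 2) / Real.sqrt τ
        - ‖z₀‖ ^ 4 * t) ∧
    (z = z₀ → τ = t →
      ‖z‖ ^ 4 * τ =
        4 * t * ‖z₀‖ ^ 2 * ((starRingEnd ℂ) z₀ * z).re
          - 2 * ‖z₀‖ ^ 4 * t ^ ((3 : ℝ) / 2) / Real.sqrt τ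
          - ‖z₀‖ ^ 4 * t) := by
  have htr : t ^ ((3 : ℝ) / 2) = t * Real.sqrt t := by
    rw [show (3:ℝ)/2 = 1 + 1/2 by norm_num, Real.rpow_add ht, Real.rpow_one,
      ← Real.sqrt_eq_rpow]
  set u := ‖z‖ with hu
  set v := ‖z₀‖ with hv
  have hu0 : 0 ≤ u := norm_nonneg z
  have hv0 : 0 ≤ v := norm_nonneg z₀
  have hs : 0 < Real.sqrt τ := Real.sqrt_pos.mpr hτ
  have hw : 0 < Real.sqrt t := Real.sqrt_pos.mpr ht
  have hs2 : Real.sqrt τ ^ 2 = τ := Real.sq_sqrt hτ.le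
  have hw2 : Real.sqrt t ^ 2 = t := Real.sq_sqrt ht.le
  set s := Real.sqrt τ
  set w := Real.sqrt t
  have hre : ((starRingEnd ℂ) z₀ * z).re ≤ v * u := by
    calc ((starRingEnd ℂ) z₀ * z).re ≤ ‖(starRingEnd ℂ) z₀ * z‖ :=
          Complex.re_le_norm _
      _ = v * u := by rw [norm_mul, Complex.norm_conj]
  constructor
  · rw [htr]
    have key : u ^ 4 * τ + 2 * v ^ 4 * (t * w) / s + v ^ 4 * t ≥ 4 * t * v ^ 2 * (v * u) := by
      rw [ge_iff_le, ← sub_nonneg]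
      have eq1 : u ^ 4 * τ + 2 * v ^ 4 * (t * w) / s + v ^ 4 * t - 4 * t * v ^ 2 * (v * u)
          = (u ^ 4 * s ^ 3 + 2 * v ^ 4 * w ^ 3 + v ^ 4 * w ^ 2 * s
              - 4 * w ^ 2 * v ^ 2 * (v * u) * s) / s := by
        rw [← hs2, ← hw2]; field_simp
      rw [eq1]
      apply div_nonneg _ hs.le
      nlinarith [mul_nonneg (sq_nonneg (u ^ 2 * s - v ^ 2 * w)) hs.le,
        mul_nonneg (sq_nonneg (u * v * s - v ^ 2 * w)) hw.le]
    have h2 : 4 * t * v ^ 2 * ((starRingEnd ℂ) z₀ * z).re ≤ 4 * t * v ^ 2 * (v * u) := by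
      apply mul_le_mul_of_nonneg_left hre
      positivity
    linarith
  · rintro rfl rfl
    have hre2 : ((starRingEnd ℂ) z * z).re = v ^ 2 := by
      rw [mul_comm, Complex.mul_conj]
      simpa using (Complex.sq_norm z).symm
    rw [htr, hre2]
    have hueqv : u = v := rfl
    rw [hueqv]
    field_simp
    ring
end

section
/- Let J be a nonempty finite index set, σ² > 0, T > 0, E ≥ 0, and ψ_j ≥ 0 real numbers for j ∈ J. Let Ψ = max_{j∈J} ψ_j. Then for any real numbers t_j > 0 and e_j ≥ 0 with Σ_j t_j ≤ T and Σ_j e_j ≤ E, it holds that Σ_j t_j·log(1 + e_j·ψ_j/(t_j·σ²)) ≤ T·log(1 + E·Ψ/(T·σ²)). -/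
/-- Abstract single-device form of Proposition 2: distributing time and energy
over several phase-shift vectors is dominated by concentrating everything on a
vector of maximum gain. -/
theorem stmt_15 {ι : Type*} (J : Finset ι) (hJ : J.Nonempty)
    (σ2 T E : ℝ) (ψ : ι → ℝ)
    (hσ : 0 < σ2) (hT : 0 < T) (hE : 0 ≤ E) (hψ : ∀ j ∈ J, 0 ≤ ψ j)
    (Ψ : ℝ) (hΨ : Ψ = J.sup' hJ ψ)
    (t e : ι → ℝ) (ht : ∀ j ∈ J, 0 < t j) (he : ∀ j ∈ J, 0 ≤ e j)
    (htT : ∑ j ∈ J, t j ≤ T) (heE : ∑ j ∈ J, e j ≤ E) :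
    ∑ j ∈ J, t j * Real.log (1 + e j * ψ j / (t j * σ2)) ≤
      T * Real.log (1 + E * Ψ / (T * σ2)) := by
  have hΨ0 : 0 ≤ Ψ := by
    obtain ⟨j, hj⟩ := hJ
    exact le_trans (hψ j hj) (hΨ ▸ Finset.le_sup' ψ hj)
  set y : ℝ := 1 + E * Ψ / (T * σ2) with hy
  have hy1 : 1 ≤ y := by
    have : 0 ≤ E * Ψ / (T * σ2) := by positivity
    exact hy ▸ le_add_of_nonneg_right this
  have hy0 : (0:ℝ) < y := by linarith
  have hlogy : 0 ≤ Real.log y := Real.log_nonneg hy1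
  -- per-term tangent line bound
  have key : ∀ j ∈ J, t j * Real.log (1 + e j * ψ j / (t j * σ2)) ≤
      t j * Real.log y + (t j + e j * Ψ / σ2 - t j * y) / y := by
    intro j hj
    have htj := ht j hj
    have hej := he j hj
    have hψj := hψ j hj
    have hψΨ : ψ j ≤ Ψ := hΨ ▸ Finset.le_sup' ψ hj
    set x : ℝ := 1 + e j * ψ j / (t j * σ2) with hx
    have hx0 : (0:ℝ) < x := by positivity
    have h1 : Real.log x ≤ Real.log y + (x / y - 1) := by
      have h2 := Real.log_le_sub_one_of_pos (show (0:ℝ) < x / y by positivity)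
      have h3 := Real.log_div (ne_of_gt hx0) (ne_of_gt hy0)
      linarith
    have h4 : t j * Real.log x ≤ t j * (Real.log y + (x / y - 1)) :=
      mul_le_mul_of_nonneg_left h1 htj.le
    have h5 : t j * (Real.log y + (x / y - 1)) =
        t j * Real.log y + (t j + e j * ψ j / σ2 - t j * y) / y := by
      have htne : t j ≠ 0 := ne_of_gt htj
      have hyne : y ≠ 0 := ne_of_gt hy0
      have hσne : σ2 ≠ 0 := ne_of_gt hσ
      rw [hx]
      field_simp [hx]
    have h6 : (t j + e j * ψ j / σ2 - t j * y) / y ≤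
        (t j + e j * Ψ / σ2 - t j * y) / y := by
      gcongr
    linarith
  have hsum := Finset.sum_le_sum key
  rw [Finset.sum_add_distrib, ← Finset.sum_mul, ← Finset.sum_div] at hsum
  set Tp : ℝ := ∑ j ∈ J, t j with hTp
  have hTp0 : 0 < Tp := Finset.sum_pos ht hJ
  have hEp0 : 0 ≤ ∑ j ∈ J, e j := Finset.sum_nonneg he
  have hsum2 : ∑ j ∈ J, (t j + e j * Ψ / σ2 - t j * y) =
      Tp + (∑ j ∈ J, e j) * Ψ / σ2 - Tp * y := by
    rw [Finset.sum_sub_distrib, Finset.sum_add_distrib, ← Finset.sum_mul]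
    simp [Finset.sum_div, Finset.sum_mul, hTp]
  rw [hsum2] at hsum
  -- bound the correction term
  have hEΨ : E * Ψ / σ2 = (y - 1) * T := by
    rw [hy]
    field_simp [hy]
    ring
  have hnum : Tp + (∑ j ∈ J, e j) * Ψ / σ2 - Tp * y ≤ (y - 1) * (T - Tp) := by
    have h7 : (∑ j ∈ J, e j) * Ψ / σ2 ≤ E * Ψ / σ2 := by gcongr
    nlinarith
  have hfrac : (Tp + (∑ j ∈ J, e j) * Ψ / σ2 - Tp * y) / y ≤
      (T - Tp) * Real.log y := by
    have h8 : (y - 1) / y ≤ Real.log y := by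
      have h9 := Real.log_le_sub_one_of_pos (show (0:ℝ) < 1 / y by positivity)
      have h10 : Real.log (1 / y) = -Real.log y := by
        rw [one_div, Real.log_inv]
      have h11 : (y - 1) / y = 1 - 1 / y := by field_simp
      linarith
    calc (Tp + (∑ j ∈ J, e j) * Ψ / σ2 - Tp * y) / y
        ≤ (y - 1) * (T - Tp) / y := by gcongr
      _ = (T - Tp) * ((y - 1) / y) := by ring
      _ ≤ (T - Tp) * Real.log y := by
          apply mul_le_mul_of_nonneg_left h8 (by linarith)
  have : Tp * Real.log y + (T - Tp) * Real.log y = T * Real.log y := by ring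
  linarith
end

section
/- Let K be a finite index set, S a nonempty set, τ_k ≥ 0 real weights, and f_k : S → ℝ functions with f_k(x) ≥ 0 for all x ∈ S and all k. Then for every pair (x, y) ∈ S × S there exists z ∈ {x, y} such that Σ_k τ_k·log(1 + f_k(x)·f_k(y)) ≤ Σ_k τ_k·log(1 + f_k(z)²). -/
lemma key_log_ineq {a b : ℝ} (ha : 0 ≤ a) (hb : 0 ≤ b) :
    2 * Real.log (1 + a * b) ≤ Real.log (1 + a ^ 2) + Real.log (1 + b ^ 2) := by
  have hab : (0:ℝ) < 1 + a * b := by positivity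
  have h1 : (0:ℝ) < 1 + a ^ 2 := by positivity
  have h2 : (0:ℝ) < 1 + b ^ 2 := by positivity
  have hsq : (1 + a * b) ^ 2 ≤ (1 + a ^ 2) * (1 + b ^ 2) := by nlinarith [sq_nonneg (a - b)]
  calc 2 * Real.log (1 + a * b) = Real.log ((1 + a * b) ^ 2) := by
        rw [Real.log_pow]; ring
    _ ≤ Real.log ((1 + a ^ 2) * (1 + b ^ 2)) := Real.log_le_log (by positivity) hsq
    _ = Real.log (1 + a ^ 2) + Real.log (1 + b ^ 2) := Real.log_mul h1.ne' h2.ne'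

/-- Pointwise form of `R*_{UL-adp} = R*_{Static}`: for any pair of phase-shift
vectors `(x, y)`, one of the two, used statically, does at least as well. -/
theorem stmt_17 {ι : Type*} {S : Type*} [Nonempty S] (K : Finset ι)
    (τ : ι → ℝ) (f : ι → S → ℝ)
    (hτ : ∀ k ∈ K, 0 ≤ τ k) (hf : ∀ k ∈ K, ∀ x : S, 0 ≤ f k x)
    (x y : S) :
    ∃ z ∈ ({x, y} : Set S),
      ∑ k ∈ K, τ k * Real.log (1 + f k x * f k y) ≤
        ∑ k ∈ K, τ k * Real.log (1 + (f k z) ^ 2) := by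
  set Sx := ∑ k ∈ K, τ k * Real.log (1 + (f k x) ^ 2)
  set Sy := ∑ k ∈ K, τ k * Real.log (1 + (f k y) ^ 2)
  have hhalf : 2 * ∑ k ∈ K, τ k * Real.log (1 + f k x * f k y) ≤ Sx + Sy := by
    rw [Finset.mul_sum]
    rw [show Sx + Sy = ∑ k ∈ K, (τ k * Real.log (1 + (f k x) ^ 2)
        + τ k * Real.log (1 + (f k y) ^ 2)) from (Finset.sum_add_distrib).symm]
    refine Finset.sum_le_sum fun k hk => ?_
    have := key_log_ineq (hf k hk x) (hf k hk y)
    have hτk := hτ k hk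
    nlinarith
  rcases le_total Sx Sy with h | h
  · exact ⟨y, by simp, by linarith⟩
  · exact ⟨x, by simp, by linarith⟩
end
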